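/- Operational bound via Choi rank: Let 𝒩 be a quantum channel on ℂ^d with Choi state J of rank r_c. For unitaries U_1,…,U_N on ℂ^d, define ρ_x = (I ⊗ U_x^t) J (I ⊗ U_x^t)†. If there exists a POVM performing conclusive k-state exclusion on {ρ_x} (i.e., ∑_x Π_x ≤ (N−k)I holds for the support projections), then N·r_c ≤ (N−k)·d², i.e., k ≤ N(d² − r_c)/d². -/

import Mathlib

open Matrix ComplexOrder Kronecker

lemma trace_eq_rank_of_proj {n : Type*} [Fintype n] [DecidableEq n]
    {P : Matrix n n ℂ} (hH : P.IsHermitian) (hI : P * P = P) :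
    P.trace = (P.rank : ℂ) := by
  have hdiag : star (hH.eigenvectorUnitary : Matrix n n ℂ) * P * (hH.eigenvectorUnitary : Matrix n n ℂ) =
      Matrix.diagonal (RCLike.ofReal ∘ hH.eigenvalues) := by
    have := hH.conjStarAlgAut_star_eigenvectorUnitary
    rw [Unitary.conjStarAlgAut_apply, Unitary.coe_star, star_star] at this
    exact this
  set V : Matrix n n ℂ := (hH.eigenvectorUnitary : Matrix n n ℂ)
  have hVV : V * star V = 1 := (Matrix.mem_unitaryGroup_iff).mp hH.eigenvectorUnitary.2
  set D : Matrix n n ℂ := Matrix.diagonal (RCLike.ofReal ∘ hH.eigenvalues) with hD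
  have htr : P.trace = D.trace := by
    rw [← hdiag, Matrix.trace_mul_cycle, hVV, one_mul]
  have hsq : ∀ i, hH.eigenvalues i = 0 ∨ hH.eigenvalues i = 1 := by
    intro i
    have h2 : D * D = D := by
      rw [← hdiag]
      simp only [mul_assoc]
      rw [← mul_assoc V (star V), hVV, one_mul, ← mul_assoc P P, hI]
    have h3 := congrArg (fun M => M i i) h2
    simp [hD, Matrix.diagonal_mul_diagonal] at h3
    have h4 : hH.eigenvalues i * hH.eigenvalues i = hH.eigenvalues i := by
      exact_mod_cast h3
    have h5 : hH.eigenvalues i * (hH.eigenvalues i - 1) = 0 := by ring_nf; linarith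
    rcases mul_eq_zero.mp h5 with h | h
    · left; exact h
    · right; linarith
  rw [htr, hH.rank_eq_card_non_zero_eigs, hD, Matrix.trace_diagonal]
  rw [Fintype.card_subtype, Finset.card_eq_sum_ones]
  push_cast
  rw [Finset.sum_filter]
  apply Finset.sum_congr rfl
  intro i _
  rcases hsq i with h | h <;> simp [h]

/-- `P` is the orthogonal projection onto the support (range) of `σ`. -/
def IsSupportProjection {n : Type*} [Fintype n] [DecidableEq n]
    (σ P : Matrix n n ℂ) : Prop :=
  P.IsHermitian ∧ P * P = P ∧
    LinearMap.range P.mulVecLin = LinearMap.range σ.mulVecLin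

/-- Partial trace over the first tensor factor. -/
noncomputable def ptraceA {d : ℕ} (M : Matrix (Fin d × Fin d) (Fin d × Fin d) ℂ) :
    Matrix (Fin d) (Fin d) ℂ :=
  fun b b' => ∑ a : Fin d, M (a, b) (a, b')

/-- Operational bound via the Choi rank: if `J` is the Choi state of a channel
(`J ≥ 0` and `tr_A J = I/d`), `ρ_x = (I ⊗ U_xᵗ) J (I ⊗ U_xᵗ)†` for unitaries
`U_x`, and conclusive `k`-state exclusion is possible, i.e. `∑ₓ Πₓ ≤ (N−k)I`,
then `N·r_c ≤ (N−k)·d²` where `r_c = rank J`. -/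
theorem choi_rank_exclusion_bound {d N k : ℕ} (hd : 0 < d) (hkN : k ≤ N)
    (J : Matrix (Fin d × Fin d) (Fin d × Fin d) ℂ)
    (hJ : J.PosSemidef)
    (hJtr : ptraceA J = ((d : ℂ)⁻¹) • (1 : Matrix (Fin d) (Fin d) ℂ))
    (U : Fin N → Matrix (Fin d) (Fin d) ℂ)
    (hU : ∀ x, U x ∈ Matrix.unitaryGroup (Fin d) ℂ)
    (ρ : Fin N → Matrix (Fin d × Fin d) (Fin d × Fin d) ℂ)
    (hρ : ∀ x, ρ x = ((1 : Matrix (Fin d) (Fin d) ℂ) ⊗ₖ (U x)ᵀ) * J *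
        ((1 : Matrix (Fin d) (Fin d) ℂ) ⊗ₖ (U x)ᵀ)ᴴ)
    (P : Fin N → Matrix (Fin d × Fin d) (Fin d × Fin d) ℂ)
    (hP : ∀ x, IsSupportProjection (ρ x) (P x))
    (hLoewner : ((((N - k : ℕ) : ℂ) •
        (1 : Matrix (Fin d × Fin d) (Fin d × Fin d) ℂ)) - ∑ x, P x).PosSemidef) :
    N * J.rank ≤ (N - k) * d ^ 2 := by
  set A : Fin N → Matrix (Fin d × Fin d) (Fin d × Fin d) ℂ :=
    fun x => (1 : Matrix (Fin d) (Fin d) ℂ) ⊗ₖ (U x)ᵀ with hA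
  -- A x is unitary
  have hkron : ∀ (B C : Matrix (Fin d) (Fin d) ℂ), (B ⊗ₖ C)ᴴ = Bᴴ ⊗ₖ Cᴴ := by
    intro B C
    ext i j
    simp [Matrix.conjTranspose_apply, mul_comm]
  have hAU : ∀ x, A x * (A x)ᴴ = 1 := by
    intro x
    have hUx' : (U x)ᴴ * U x = 1 := (Matrix.mem_unitaryGroup_iff').mp (hU x)
    have hT : (U x)ᵀ * ((U x)ᵀ)ᴴ = 1 := by
      have : ((U x)ᵀ)ᴴ = ((U x)ᴴ)ᵀ := rfl
      rw [this, ← Matrix.transpose_mul, hUx', Matrix.transpose_one]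
    calc A x * (A x)ᴴ
        = ((1 : Matrix (Fin d) (Fin d) ℂ) * (1 : Matrix (Fin d) (Fin d) ℂ)ᴴ) ⊗ₖ
          ((U x)ᵀ * ((U x)ᵀ)ᴴ) := by
          rw [hA]; rw [hkron, Matrix.mul_kronecker_mul]
      _ = 1 := by rw [hT, Matrix.conjTranspose_one, mul_one, Matrix.one_kronecker_one]
  have hdetA : ∀ x, IsUnit (A x).det := fun x =>
    IsUnit.of_mul_eq_one _ (by rw [← Matrix.det_mul, hAU x, Matrix.det_one])
  have hdetAH : ∀ x, IsUnit (A x)ᴴ.det := fun x => by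
    rw [Matrix.det_conjTranspose]
    exact (hdetA x).star
  -- rank of ρ x equals rank of J
  have hrankρ : ∀ x, (ρ x).rank = J.rank := by
    intro x
    rw [hρ x, Matrix.rank_mul_eq_left_of_isUnit_det _ _ (hdetAH x),
      Matrix.rank_mul_eq_right_of_isUnit_det _ _ (hdetA x)]
  have hrankP : ∀ x, (P x).rank = J.rank := by
    intro x
    rw [← hrankρ x]
    unfold Matrix.rank
    rw [(hP x).2.2]
  -- trace of each P x
  have htrP : ∀ x, (P x).trace = (J.rank : ℂ) := by
    intro x
    rw [trace_eq_rank_of_proj (hP x).1 (hP x).2.1, hrankP x]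
  -- trace of the PSD matrix is nonneg
  set M := ((((N - k : ℕ) : ℂ) •
      (1 : Matrix (Fin d × Fin d) (Fin d × Fin d) ℂ)) - ∑ x, P x) with hM
  have hdiagM : ∀ i, 0 ≤ M i i := by
    intro i
    have h := hLoewner.dotProduct_mulVec_nonneg (Pi.single i 1)
    have he : star (Pi.single i (1:ℂ)) ⬝ᵥ (M *ᵥ Pi.single i 1) = M i i := by
      simp [Matrix.mulVec_single, dotProduct, Pi.single_apply, apply_ite]
    rwa [he] at h
  have htrM : 0 ≤ M.trace := by
    rw [Matrix.trace]
    exact Finset.sum_nonneg fun i _ => hdiagM i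
  have htrM' : M.trace = ((N - k : ℕ) : ℂ) * (d : ℂ) ^ 2 - (N : ℂ) * (J.rank : ℂ) := by
    rw [hM, Matrix.trace_sub, Matrix.trace_smul, Matrix.trace_one, Matrix.trace_sum]
    simp only [htrP, Finset.sum_const, Finset.card_univ, Fintype.card_fin, Fintype.card_prod,
      nsmul_eq_mul, smul_eq_mul]
    push_cast
    ring
  rw [htrM'] at htrM
  have hineq' : (N : ℂ) * (J.rank : ℂ) ≤ ((N - k : ℕ) : ℂ) * (d : ℂ) ^ 2 :=
    sub_nonneg.mp htrM
  have hineq : ((N * J.rank : ℕ) : ℂ) ≤ (((N - k) * d ^ 2 : ℕ) : ℂ) := by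
    push_cast
    exact hineq'
  exact_mod_cast hineq
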